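/- Let φ : EuclideanSpace ℝ (Fin d) → EuclideanSpace ℝ (Fin q) be Lipschitz continuous with constant L > 0 (with respect to the Euclidean norms), and let g : EuclideanSpace ℝ (Fin q) → ℝ be convex. Let x satisfy g(φ(x)) > 0 and let v ∈ EuclideanSpace ℝ (Fin q) be a nonzero vector with g(y) ≥ g(φ(x)) + ⟪v, y − φ(x)⟫ for all y. Then for every δ with ‖δ‖₂ < g(φ(x)) / (L · ‖v‖₂), it holds that g(φ(x + δ)) > 0. -/

import Mathlib

/-- **ℓ₂-specialization of the certified robustness radius** (Theorem 1 of the paper).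
The subgradient is represented as a vector `v` via the Euclidean inner product, and the
dual of the ℓ₂-norm is the ℓ₂-norm itself. -/
theorem feature_convex_certified_radius_l2 {d q : ℕ}
    (φ : EuclideanSpace ℝ (Fin d) → EuclideanSpace ℝ (Fin q))
    (L : NNReal) (hL : 0 < L) (hφ : LipschitzWith L φ)
    (g : EuclideanSpace ℝ (Fin q) → ℝ) (hg : ConvexOn ℝ Set.univ g)
    (x : EuclideanSpace ℝ (Fin d)) (hx : 0 < g (φ x))
    (v : EuclideanSpace ℝ (Fin q)) (hv : v ≠ 0)
    (hsub : ∀ y : EuclideanSpace ℝ (Fin q), g (φ x) + (inner ℝ v (y - φ x) : ℝ) ≤ g y)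
    (δ : EuclideanSpace ℝ (Fin d)) (hδ : ‖δ‖ < g (φ x) / ((L : ℝ) * ‖v‖)) :
    0 < g (φ (x + δ)) := by
  have hvpos : (0:ℝ) < ‖v‖ := norm_pos_iff.mpr hv
  have hLpos : (0:ℝ) < (L:ℝ) := hL
  have h1 : g (φ x) + (inner ℝ v (φ (x + δ) - φ x) : ℝ) ≤ g (φ (x + δ)) := hsub _
  have h2 : |(inner ℝ v (φ (x + δ) - φ x) : ℝ)| ≤ ‖v‖ * ‖φ (x + δ) - φ x‖ :=
    abs_real_inner_le_norm _ _
  have h3 : ‖φ (x + δ) - φ x‖ ≤ (L:ℝ) * ‖δ‖ := by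
    have := hφ.dist_le_mul (x + δ) x
    simpa [dist_eq_norm, add_sub_cancel_left] using this
  have h4 : ‖v‖ * ‖φ (x + δ) - φ x‖ ≤ ‖v‖ * ((L:ℝ) * ‖δ‖) :=
    mul_le_mul_of_nonneg_left h3 (norm_nonneg _)
  have h5 : ‖v‖ * ((L:ℝ) * ‖δ‖) < g (φ x) := by
    have := (lt_div_iff₀ (by positivity)).mp hδ
    nlinarith
  have h6 : -(inner ℝ v (φ (x + δ) - φ x) : ℝ) < g (φ x) := by
    have := (abs_le.mp h2).1
    linarith
  linarith
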